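/- Let δ > 0. Define B₊(x) = (2 sin²(πx)/π²)·[Σ_{k=0}^∞ 1/(x−k)² + 1/x] − 1 and B₋(x) = (2 sin²(πx)/π²)·[Σ_{k=1}^∞ 1/(x−k)² + 1/x] − 1 (each extended continuously across its removable singularities), and set φ₊(x) = ½ B₊(δ+x) + ½ B₊(δ−x) and φ₋(x) = ½ B₋(δ+x) + ½ B₋(δ−x). Then φ₊ and φ₋ are Lebesgue integrable on ℝ, and ∫_ℝ φ₊(x) dx = 2δ + 1 and ∫_ℝ φ₋(x) dx = 2δ − 1. -/

import Mathlib

open Classical in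
/-- The Beurling–Selberg majorant building block
`B₊(x) = (2 sin²(πx)/π²)(Σ_{k=0}^∞ 1/(x-k)² + 1/x) - 1`, extended continuously across the
removable singularities at the nonnegative integers (where its value is `1`). -/
noncomputable def Bplus (x : ℝ) : ℝ :=
  if ∃ n : ℕ, x = (n : ℝ) then 1
  else 2 * Real.sin (Real.pi * x) ^ 2 / Real.pi ^ 2 *
    ((∑' k : ℕ, 1 / (x - (k : ℝ)) ^ 2) + 1 / x) - 1

open Classical in
/-- The Beurling–Selberg minorant building block
`B₋(x) = (2 sin²(πx)/π²)(Σ_{k=1}^∞ 1/(x-k)² + 1/x) - 1`, extended continuously across the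
removable singularities at the positive integers (where its value is `1`); at `x = 0` the
formula itself is continuous with value `-1` (in Lean `1/0 = 0`). -/
noncomputable def Bminus (x : ℝ) : ℝ :=
  if ∃ n : ℕ, 0 < n ∧ x = (n : ℝ) then 1
  else 2 * Real.sin (Real.pi * x) ^ 2 / Real.pi ^ 2 *
    ((∑' k : ℕ, 1 / (x - ((k : ℝ) + 1)) ^ 2) + 1 / x) - 1

/-- The Beurling–Selberg majorant `φ₊(x) = ½ B₊(δ+x) + ½ B₊(δ-x)` of `1_{[-δ,δ]}`. -/
noncomputable def phiPlus (δ x : ℝ) : ℝ := Bplus (δ + x) / 2 + Bplus (δ - x) / 2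

/-- The Beurling–Selberg minorant `φ₋(x) = ½ B₋(δ+x) + ½ B₋(δ-x)` of `1_{(-δ,δ)}`. -/
noncomputable def phiMinus (δ x : ℝ) : ℝ := Bminus (δ + x) / 2 + Bminus (δ - x) / 2


open Real Set MeasureTheory Filter Topology


noncomputable def PP (x : ℝ) : ℝ := ∑' k : ℕ, 1 / (x + k) ^ 2

lemma base_summable : Summable (fun k : ℕ => 1 / ((k : ℝ) + 1) ^ 2) := by
  have h0 : Summable (fun n : ℕ => 1 / (n : ℝ) ^ 2) := summable_one_div_nat_pow.mpr one_lt_two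
  have h := (summable_nat_add_iff 1).mpr h0
  simpa using h

lemma base_sum_le : (∑' k : ℕ, 1 / ((k : ℝ) + 1) ^ 2) ≤ 2 := by
  apply base_summable.tsum_le_of_sum_range_le
  intro n
  have key : ∀ k ∈ Finset.range n, 1 / ((k : ℝ) + 1) ^ 2 ≤
      2 / ((k : ℝ) + 1) - 2 / (((k : ℝ) + 1) + 1) := by
    intro k _
    have h1 : (0:ℝ) < (k : ℝ) + 1 := by positivity
    have h2 : (0:ℝ) < (k : ℝ) + 2 := by positivity
    have e : 2 / ((k : ℝ) + 1) - 2 / (((k : ℝ) + 1) + 1) =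
        2 / (((k : ℝ) + 1) * ((k : ℝ) + 2)) := by
      field_simp; ring
    rw [e, div_le_div_iff₀ (by positivity) (by positivity)]
    nlinarith
  calc (∑ k ∈ Finset.range n, 1 / ((k : ℝ) + 1) ^ 2)
      ≤ ∑ k ∈ Finset.range n, (2 / ((k : ℝ) + 1) - 2 / (((k : ℝ) + 1) + 1)) :=
        Finset.sum_le_sum key
    _ = ∑ k ∈ Finset.range n, ((fun k : ℕ => 2 / ((k : ℝ) + 1)) k - (fun k : ℕ => 2 / ((k : ℝ) + 1)) (k + 1)) := by
        apply Finset.sum_congr rfl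
        intro k _
        push_cast
        ring
    _ = (fun k : ℕ => 2 / ((k : ℝ) + 1)) 0 - (fun k : ℕ => 2 / ((k : ℝ) + 1)) n :=
        Finset.sum_range_sub' (fun k : ℕ => 2 / ((k : ℝ) + 1)) n
    _ ≤ 2 := by
        have : (0:ℝ) ≤ 2 / ((n : ℝ) + 1) := by positivity
        norm_num; linarith

lemma summable_PP (x : ℝ) : Summable (fun k : ℕ => 1 / (x + k) ^ 2) := by
  set N : ℕ := ⌈|x|⌉₊ + 1 with hN
  apply (summable_nat_add_iff N).mp
  apply Summable.of_nonneg_of_le (fun k => by positivity) _ base_summable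
  intro k
  have hcast : ((k + N : ℕ) : ℝ) = (k : ℝ) + N := by push_cast; ring
  have hxN : |x| + 1 ≤ (N : ℝ) := by
    have := Nat.le_ceil |x|
    push_cast [hN]; linarith
  have hle : (k : ℝ) + 1 ≤ x + ((k + N : ℕ) : ℝ) := by
    rw [hcast]
    have : -|x| ≤ x := neg_abs_le x
    linarith
  apply one_div_le_one_div_of_le (by positivity)
  have h1 : (0:ℝ) ≤ (k : ℝ) + 1 := by positivity
  nlinarith

lemma PP_nonneg (x : ℝ) : 0 ≤ PP x := tsum_nonneg (fun k => by positivity)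

lemma PP_succ (x : ℝ) : PP x = 1 / x ^ 2 + PP (x + 1) := by
  rw [PP, (summable_PP x).tsum_eq_zero_add]
  congr 1
  · norm_num
  · rw [PP]
    apply tsum_congr
    intro k
    push_cast
    ring_nf

lemma PP_le_two {y : ℝ} (hy : 1 ≤ y) : PP y ≤ 2 := by
  refine le_trans (Summable.tsum_le_tsum (fun k => ?_) (summable_PP y) base_summable) base_sum_le
  apply one_div_le_one_div_of_le (by positivity)
  have : (k : ℝ) + 1 ≤ y + k := by linarith
  nlinarith [Nat.cast_nonneg (α := ℝ) k]

lemma PP_le {x : ℝ} (hx : 0 < x) : PP x ≤ 1 / x ^ 2 + 2 := by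
  rw [PP_succ]
  have := PP_le_two (y := x + 1) (by linarith)
  linarith

lemma quarter (b : ℝ) : 4 * (1 / b ^ 2) = 1 / (b / 2) ^ 2 := by
  rcases eq_or_ne b 0 with h | h
  · simp [h]
  · field_simp
    ring

lemma PP_dup (x : ℝ) : PP (x / 2) + PP ((x + 1) / 2) = 4 * PP x := by
  set f : ℕ → ℝ := fun m => 4 * (1 / (x + m) ^ 2) with hf
  have hsum : Summable f := (summable_PP x).mul_left 4
  have he : Summable fun k => f (2 * k) :=
    hsum.comp_injective (fun a b h => by omega)
  have ho : Summable fun k => f (2 * k + 1) :=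
    hsum.comp_injective (fun a b h => by omega)
  have h := tsum_even_add_odd he ho
  have e1 : (∑' k : ℕ, f (2 * k)) = PP (x / 2) := by
    rw [PP]
    apply tsum_congr
    intro k
    show 4 * (1 / (x + ((2 * k : ℕ) : ℝ)) ^ 2) = _
    push_cast
    rw [quarter]
    congr 2
    ring
  have e2 : (∑' k : ℕ, f (2 * k + 1)) = PP ((x + 1) / 2) := by
    rw [PP]
    apply tsum_congr
    intro k
    show 4 * (1 / (x + ((2 * k + 1 : ℕ) : ℝ)) ^ 2) = _
    push_cast
    rw [quarter]
    congr 2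
    ring
  have e3 : (∑' m : ℕ, f m) = 4 * PP x := by
    rw [PP, hf, tsum_mul_left]
  rw [e1, e2, e3] at h
  exact h

noncomputable def DD (x : ℝ) : ℝ := PP x + PP (1 - x)

lemma PP_neg (x : ℝ) : PP (-x) = 1 / x ^ 2 + PP (1 - x) := by
  rw [PP_succ (-x), show -x + 1 = 1 - x by ring, neg_pow]
  norm_num

lemma DD_add_one (x : ℝ) : DD (x + 1) = DD x := by
  unfold DD
  have h1 : PP (-x) = 1 / x ^ 2 + PP (1 - x) := PP_neg x
  have h2 : PP x = 1 / x ^ 2 + PP (x + 1) := PP_succ x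
  rw [show (1:ℝ) - (x + 1) = -x by ring]
  linarith

lemma DD_even (x : ℝ) : DD (-x) = DD x := by
  unfold DD
  have h1 : PP (-x) = 1 / x ^ 2 + PP (1 - x) := PP_neg x
  have h2 : PP x = 1 / x ^ 2 + PP (x + 1) := PP_succ x
  rw [show (1:ℝ) - -x = x + 1 by ring]
  linarith

lemma DD_int (x : ℝ) (m : ℤ) : DD (x + m) = DD x := by
  induction m using Int.induction_on with
  | zero => simp
  | succ n ih =>
      have : x + ((n : ℤ) + 1 : ℤ) = (x + (n : ℤ)) + 1 := by push_cast; ring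
      rw [this, DD_add_one]
      exact ih
  | pred n ih =>
      have h := DD_add_one (x + (-(n:ℝ) - 1))
      rw [show x + (-(n:ℝ) - 1) + 1 = x + ((-n : ℤ) : ℝ) by push_cast; ring] at h
      rw [show (((-(n:ℤ) - 1 : ℤ)) : ℝ) = -(n:ℝ) - 1 by push_cast; ring]
      rw [← h]
      exact ih

lemma DD_dup (x : ℝ) : DD (x / 2) + DD ((x + 1) / 2) = 4 * DD x := by
  unfold DD
  have h1 := PP_dup x
  have h2 := PP_dup (1 - x)
  rw [show (1:ℝ) - x / 2 = ((1 - x) + 1) / 2 by ring, show (1:ℝ) - (x + 1) / 2 = (1 - x) / 2 by ring]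
  linarith

noncomputable def hh (x : ℝ) : ℝ := DD x - π ^ 2 / Real.sin (π * x) ^ 2

lemma sin_pi_ne {x : ℝ} (hx : ∀ m : ℤ, x ≠ (m : ℝ)) : Real.sin (π * x) ≠ 0 := by
  intro h
  rcases Real.sin_eq_zero_iff.1 h with ⟨n, hn⟩
  apply hx n
  have h2 : π * (n : ℝ) = π * x := by linarith [hn]
  exact (mul_left_cancel₀ Real.pi_ne_zero h2).symm

lemma sin_sq_per (x : ℝ) (m : ℤ) : Real.sin (π * (x + m)) ^ 2 = Real.sin (π * x) ^ 2 := by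
  rw [show π * (x + m) = π * x + m * π by ring, Real.sin_add_int_mul_pi]
  rw [mul_pow]
  have : ((-1 : ℝ) ^ m) ^ 2 = 1 := by
    rw [← zpow_natCast ((-1 : ℝ) ^ m) 2, ← zpow_mul]
    rw [show (m * (2:ℕ) : ℤ) = 2 * m by push_cast; ring, zpow_mul]
    norm_num
  rw [this, one_mul]

lemma hh_period (x : ℝ) (m : ℤ) : hh (x + m) = hh x := by
  unfold hh
  rw [DD_int, sin_sq_per]

lemma hh_even (x : ℝ) : hh (-x) = hh x := by
  unfold hh
  rw [DD_even, show π * -x = -(π * x) by ring, Real.sin_neg, neg_sq]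

lemma half_not_int {x : ℝ} (hx : ∀ m : ℤ, x ≠ (m : ℝ)) : ∀ m : ℤ, x / 2 ≠ (m : ℝ) := by
  intro m h
  apply hx (2 * m)
  push_cast
  linarith [h]

lemma half_not_int' {x : ℝ} (hx : ∀ m : ℤ, x ≠ (m : ℝ)) : ∀ m : ℤ, (x + 1) / 2 ≠ (m : ℝ) := by
  intro m h
  apply hx (2 * m - 1)
  push_cast
  linarith [h]

lemma g_dup {x : ℝ} (hx : ∀ m : ℤ, x ≠ (m : ℝ)) :
    π ^ 2 / Real.sin (π * (x / 2)) ^ 2 + π ^ 2 / Real.sin (π * ((x + 1) / 2)) ^ 2 =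
      4 * (π ^ 2 / Real.sin (π * x) ^ 2) := by
  have hs : Real.sin (π * (x / 2)) ≠ 0 := sin_pi_ne (half_not_int hx)
  have hc' : Real.sin (π * ((x + 1) / 2)) ≠ 0 := sin_pi_ne (half_not_int' hx)
  have hcos : Real.sin (π * ((x + 1) / 2)) = Real.cos (π * (x / 2)) := by
    rw [show π * ((x + 1) / 2) = π * (x / 2) + π / 2 by ring, Real.sin_add_pi_div_two]
  have hsin2 : Real.sin (π * x) = 2 * Real.sin (π * (x / 2)) * Real.cos (π * (x / 2)) := by
    rw [show π * x = 2 * (π * (x / 2)) by ring, Real.sin_two_mul]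
  have hc : Real.cos (π * (x / 2)) ≠ 0 := hcos ▸ hc'
  have hpyth := Real.sin_sq_add_cos_sq (π * (x / 2))
  rw [hcos, hsin2]
  set s := Real.sin (π * (x / 2))
  set c := Real.cos (π * (x / 2))
  field_simp
  linear_combination 4 * hpyth

lemma hh_dup {x : ℝ} (hx : ∀ m : ℤ, x ≠ (m : ℝ)) :
    hh x = (hh (x / 2) + hh ((x + 1) / 2)) / 4 := by
  have h1 := DD_dup x
  have h2 := g_dup hx
  unfold hh
  linarith

lemma g_lower {x : ℝ} (h0 : 0 < x) (h1 : x < 1) :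
    1 / x ^ 2 ≤ π ^ 2 / Real.sin (π * x) ^ 2 := by
  have hsl : Real.sin (π * x) < π * x := Real.sin_lt (by positivity)
  have hsp : 0 < Real.sin (π * x) :=
    Real.sin_pos_of_pos_of_lt_pi (by positivity) (by nlinarith [Real.pi_pos])
  have h2 : Real.sin (π * x) ^ 2 ≤ (π * x) ^ 2 := by nlinarith
  have h3 : π ^ 2 / (π * x) ^ 2 ≤ π ^ 2 / Real.sin (π * x) ^ 2 := by
    apply div_le_div_of_nonneg_left (by positivity) (by positivity) h2
  have h4 : π ^ 2 / (π * x) ^ 2 = 1 / x ^ 2 := by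
    rw [mul_pow]
    rw [div_eq_div_iff (by positivity) (by positivity)]
    ring
  linarith

lemma g_upper_small {x : ℝ} (h0 : 0 < x) (h4 : x ≤ 1 / 4) :
    π ^ 2 / Real.sin (π * x) ^ 2 - 1 / x ^ 2 ≤ 13 := by
  set t := π * x with ht
  have hpi1 : π < 3.15 := Real.pi_lt_d2
  have hpi0 : 3.14 < π := by linarith [Real.pi_gt_d6]
  have ht0 : 0 < t := by positivity
  have ht1 : t ≤ 0.7875 := by rw [ht]; nlinarith
  have hsin_gt : t - t ^ 3 / 4 < Real.sin t := by
    have := Real.sin_gt_sub_cube ht0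
    nlinarith [pow_pos ht0 3]
  have hub : Real.sin t < t := Real.sin_lt ht0
  have ht2 : t ^ 2 ≤ 0.62015625 := by nlinarith
  have ht3 : t ^ 3 ≤ 0.62015625 * t := by nlinarith [mul_le_mul_of_nonneg_right ht2 ht0.le]
  have hlb : 4 / 5 * t ≤ Real.sin t := by nlinarith [hsin_gt, ht3]
  have hs0 : 0 < Real.sin t := lt_of_lt_of_le (by positivity) hlb
  have e1 : t ^ 2 - Real.sin t ^ 2 ≤ t ^ 4 / 2 := by nlinarith
  have e2 : 16 / 25 * t ^ 2 ≤ Real.sin t ^ 2 := by nlinarith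
  have key : π ^ 2 / Real.sin t ^ 2 - π ^ 2 / t ^ 2 ≤ 13 := by
    rw [div_sub_div _ _ (ne_of_gt (pow_pos hs0 2)) (ne_of_gt (pow_pos ht0 2))]
    rw [div_le_iff₀ (by positivity)]
    have hpisq : π ^ 2 ≤ 9.9225 := by nlinarith
    have hA : π ^ 2 * (t ^ 2 - Real.sin t ^ 2) ≤ 9.9225 * (t ^ 4 / 2) := by
      nlinarith [mul_le_mul_of_nonneg_left e1 (sq_nonneg π),
        mul_le_mul_of_nonneg_right hpisq (by positivity : (0:ℝ) ≤ t ^ 4 / 2)]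
    have hB : 13 * (16 / 25 * t ^ 2) * t ^ 2 ≤ 13 * (Real.sin t ^ 2 * t ^ 2) := by
      nlinarith [mul_le_mul_of_nonneg_right e2 (sq_nonneg t)]
    nlinarith [hA, hB]
  have e3 : π ^ 2 / t ^ 2 = 1 / x ^ 2 := by
    rw [ht, mul_pow, div_eq_div_iff (by positivity) (by positivity)]
    ring
  linarith

lemma g_mid {x : ℝ} (h1 : 1 / 4 ≤ x) (h2 : x ≤ 3 / 4) :
    π ^ 2 / Real.sin (π * x) ^ 2 ≤ 20 := by
  have hpi1 : π < 3.15 := Real.pi_lt_d2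
  have hpi0 : 3.14 < π := by linarith [Real.pi_gt_d6]
  have hsin : Real.sin (π * x) = Real.cos (π / 2 - π * x) := (Real.cos_pi_div_two_sub _).symm
  have habs : |π / 2 - π * x| ≤ π / 4 := by
    rw [abs_le]
    constructor <;> nlinarith
  have hcos : Real.sqrt 2 / 2 ≤ Real.cos (π / 2 - π * x) :=
    calc Real.sqrt 2 / 2 = Real.cos (π / 4) := Real.cos_pi_div_four.symm
      _ ≤ Real.cos |π / 2 - π * x| :=
          Real.cos_le_cos_of_nonneg_of_le_pi (abs_nonneg _) (by linarith) habs
      _ = Real.cos (π / 2 - π * x) := Real.cos_abs _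
  have hsq2 : (1:ℝ) ≤ Real.sqrt 2 := by
    nlinarith [Real.sq_sqrt (by norm_num : (2:ℝ) ≥ 0), Real.sqrt_nonneg 2]
  have hs2 : (1:ℝ) / 2 ≤ Real.sin (π * x) ^ 2 := by
    rw [hsin]
    nlinarith [Real.sq_sqrt (by norm_num : (2:ℝ) ≥ 0)]
  have h3 : π ^ 2 / Real.sin (π * x) ^ 2 ≤ π ^ 2 / (1 / 2) := by
    apply div_le_div_of_nonneg_left (by positivity) (by norm_num) hs2
  nlinarith

lemma hh_bound_main {x : ℝ} (h0 : 0 < x) (h34 : x ≤ 3 / 4) : |hh x| ≤ 56 := by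
  rcases le_or_gt x (1 / 4) with hc | hc
  · have e : hh x = (PP (x + 1) + PP (1 - x)) - (π ^ 2 / Real.sin (π * x) ^ 2 - 1 / x ^ 2) := by
      unfold hh DD
      rw [PP_succ x]
      ring
    have b1 : 0 ≤ PP (x + 1) := PP_nonneg _
    have b2 : PP (x + 1) ≤ 2 := PP_le_two (by linarith)
    have b3 : 0 ≤ PP (1 - x) := PP_nonneg _
    have b4 : PP (1 - x) ≤ 1 / (1 - x) ^ 2 + 2 := PP_le (by linarith)
    have b4' : 1 / (1 - x) ^ 2 ≤ 16 / 9 := by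
      rw [div_le_div_iff₀ (by nlinarith) (by norm_num)]
      nlinarith
    have b5 : 0 ≤ π ^ 2 / Real.sin (π * x) ^ 2 - 1 / x ^ 2 := by
      linarith [g_lower h0 (by linarith : x < 1)]
    have b6 := g_upper_small h0 hc
    rw [e, abs_le]
    constructor <;> linarith
  · have b1 : 0 ≤ DD x := by
      unfold DD; linarith [PP_nonneg x, PP_nonneg (1 - x)]
    have b2 : DD x ≤ 36 := by
      unfold DD
      have p1 : PP x ≤ 1 / x ^ 2 + 2 := PP_le h0
      have p2 : PP (1 - x) ≤ 1 / (1 - x) ^ 2 + 2 := PP_le (by linarith)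
      have q1 : 1 / x ^ 2 ≤ 16 := by
        rw [div_le_iff₀ (by positivity)]; nlinarith
      have q2 : 1 / (1 - x) ^ 2 ≤ 16 := by
        rw [div_le_iff₀ (by nlinarith)]; nlinarith
      linarith
    have b3 : 0 ≤ π ^ 2 / Real.sin (π * x) ^ 2 := by positivity
    have b4 := g_mid hc.le h34
    unfold hh
    rw [abs_le]
    constructor <;> linarith

lemma hh_bound {x : ℝ} (hx : ∀ m : ℤ, x ≠ (m : ℝ)) : |hh x| ≤ 56 := by
  set n : ℤ := ⌊x⌋ with hn
  set y := x - n with hy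
  have hy0 : 0 < y := by
    have h1 : (n : ℝ) ≤ x := Int.floor_le x
    have h2 : x ≠ (n : ℝ) := hx n
    rw [hy]
    cases' lt_or_eq_of_le h1 with h h
    · linarith
    · exact absurd h.symm h2
  have hy1 : y < 1 := by
    have := Int.lt_floor_add_one x
    rw [hy]; push_cast; linarith
  have hper : hh y = hh x := by
    have h := hh_period y n
    rw [show y + (n : ℝ) = x by rw [hy]; ring] at h
    exact h.symm
  rcases le_or_gt y (3 / 4) with h | h
  · rw [← hper]; exact hh_bound_main hy0 h
  · have e1 : hh (1 - y) = hh y := by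
      have hev : hh (-(1 - y)) = hh (1 - y) := hh_even (1 - y)
      have hper2 : hh ((y - 1) + ((1:ℤ) : ℝ)) = hh (y - 1) := hh_period (y - 1) 1
      rw [show (y - 1) + ((1:ℤ) : ℝ) = y by push_cast; ring] at hper2
      rw [show -(1 - y) = y - 1 by ring] at hev
      rw [← hev, hper2]
    rw [← hper, ← e1]
    exact hh_bound_main (by linarith) (by linarith)

lemma DD_eq {x : ℝ} (hx : ∀ m : ℤ, x ≠ (m : ℝ)) :
    DD x = π ^ 2 / Real.sin (π * x) ^ 2 := by
  have key : ∀ n : ℕ, ∀ y : ℝ, (∀ m : ℤ, y ≠ (m : ℝ)) → |hh y| ≤ 56 / 2 ^ n := by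
    intro n
    induction n with
    | zero => simpa using fun y hy => hh_bound hy
    | succ n ih =>
        intro y hy
        have h1 := ih (y / 2) (half_not_int hy)
        have h2 := ih ((y + 1) / 2) (half_not_int' hy)
        rw [hh_dup hy]
        have habs : |hh (y / 2) + hh ((y + 1) / 2)| ≤ 56 / 2 ^ n + 56 / 2 ^ n :=
          le_trans (abs_add_le _ _) (by linarith)
        rw [abs_div]
        have h2n : (0:ℝ) < 2 ^ n := by positivity
        rw [show |(4:ℝ)| = 4 by norm_num]
        rw [div_le_div_iff₀ (by norm_num) (by positivity)]
        rw [pow_succ] at *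
        calc |hh (y / 2) + hh ((y + 1) / 2)| * (2 ^ n * 2)
            ≤ (56 / 2 ^ n + 56 / 2 ^ n) * (2 ^ n * 2) := by
              apply mul_le_mul_of_nonneg_right habs (by positivity)
          _ = 56 * 4 := by field_simp; ring
  have htend : Tendsto (fun n : ℕ => (56:ℝ) / 2 ^ n) atTop (𝓝 0) := by
    have h := tendsto_pow_atTop_nhds_zero_of_lt_one (by norm_num : (0:ℝ) ≤ 1/2) (by norm_num : (1:ℝ)/2 < 1)
    have h2 := h.const_mul (56:ℝ)
    rw [mul_zero] at h2
    convert h2 using 2 with n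
    rw [div_pow, one_pow]
    ring
  have h0 : |hh x| ≤ 0 := ge_of_tendsto' htend (fun n => key n x hx)
  have : hh x = 0 := abs_eq_zero.mp (le_antisymm h0 (abs_nonneg _))
  unfold hh at this
  linarith

noncomputable def qq (x : ℝ) : ℝ := 2 * Real.sin (π * x) ^ 2 / π ^ 2

lemma qq_nonneg (x : ℝ) : 0 ≤ qq x := by unfold qq; positivity

lemma qq_le (x : ℝ) : qq x ≤ 2 / π ^ 2 := by
  unfold qq
  have h := Real.neg_one_le_sin (π * x)
  have h2 := Real.sin_le_one (π * x)
  have : Real.sin (π * x) ^ 2 ≤ 1 := by nlinarith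
  rw [div_le_div_iff₀ (by positivity) (by positivity)]
  nlinarith [Real.pi_pos]

lemma qq_le' {x : ℝ} (hx : 0 ≤ x) : qq x ≤ 2 * x ^ 2 := by
  unfold qq
  have h3 : Real.sin (π * x) ^ 2 ≤ (π * x) ^ 2 := Real.sin_sq_le_sq
  rw [div_le_iff₀ (by positivity)]
  nlinarith [Real.pi_pos]

lemma qq_mul_DD {x : ℝ} (hx : ∀ m : ℤ, x ≠ (m : ℝ)) : qq x * DD x = 2 := by
  rw [DD_eq hx]
  unfold qq
  have hs := sin_pi_ne hx
  field_simp

lemma qq_per_nat (y : ℝ) (n : ℕ) : qq (y + n) = qq y := by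
  unfold qq
  have h := sin_sq_per y (n : ℤ)
  push_cast at h
  rw [h]

-- telescoping sums
lemma hasSum_inv_sub {x : ℝ} (hx : 0 < x) :
    HasSum (fun k : ℕ => 1 / (x + k) - 1 / (x + k + 1)) (1 / x) := by
  have hnn : ∀ k : ℕ, 0 ≤ 1 / (x + k) - 1 / (x + k + 1) := by
    intro k
    have h1 : (0:ℝ) < x + k := by positivity
    have h2 : (0:ℝ) < x + k + 1 := by positivity
    rw [sub_nonneg]
    apply one_div_le_one_div_of_le h1 (by linarith)
  rw [hasSum_iff_tendsto_nat_of_nonneg hnn]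
  have hps : ∀ n : ℕ, (∑ k ∈ Finset.range n, (1 / (x + k) - 1 / (x + k + 1))) =
      1 / x - 1 / (x + n) := by
    intro n
    have e := Finset.sum_congr rfl (fun k (_ : k ∈ Finset.range n) =>
      (by push_cast; ring : 1 / (x + k) - 1 / (x + k + 1) =
        (fun j : ℕ => 1 / (x + j)) k - (fun j : ℕ => 1 / (x + j)) (k + 1)))
    rw [e, Finset.sum_range_sub']
    norm_num
  simp_rw [hps]
  have h1 : Tendsto (fun n : ℕ => x + (n : ℝ)) atTop atTop :=
    tendsto_atTop_add_const_left _ _ tendsto_natCast_atTop_atTop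
  have h2 : Tendsto (fun n : ℕ => 1 / (x + (n : ℝ))) atTop (𝓝 0) := by
    simp_rw [one_div]
    exact h1.inv_tendsto_atTop
  have := (tendsto_const_nhds (x := 1 / x) (f := atTop (α := ℕ))).sub h2
  simpa using this

lemma hasSum_TT {x : ℝ} (hx : 0 < x) :
    HasSum (fun k : ℕ => 1 / ((x + k) * (x + k + 1) ^ 2)) (1 / x - PP (x + 1)) := by
  have h1 := hasSum_inv_sub hx
  have h2 : HasSum (fun k : ℕ => 1 / (x + 1 + k) ^ 2) (PP (x + 1)) :=
    (summable_PP (x + 1)).hasSum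
  have h3 := h1.sub h2
  have he : ∀ k : ℕ, (1 / (x + k) - 1 / (x + k + 1)) - 1 / (x + 1 + k) ^ 2 =
      1 / ((x + k) * (x + k + 1) ^ 2) := by
    intro k
    have ha : (0:ℝ) < x + k := by positivity
    have hb : (0:ℝ) < x + k + 1 := by positivity
    have hc : x + 1 + (k:ℝ) = x + k + 1 := by ring
    rw [hc]
    field_simp
    ring
  rw [show (fun k : ℕ => (1 / (x + k) - 1 / (x + k + 1)) - 1 / (x + 1 + k) ^ 2) =
    (fun k : ℕ => 1 / ((x + k) * (x + k + 1) ^ 2)) from funext he] at h3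
  exact h3

lemma TT_nonneg {x : ℝ} (hx : 0 < x) : 0 ≤ 1 / x - PP (x + 1) :=
  (hasSum_TT hx).nonneg (fun k => by positivity)

lemma hasSum_tele2 {x : ℝ} (hx : 0 < x) :
    HasSum (fun k : ℕ => 1 / ((x + k) * (x + k + 1)) - 1 / ((x + k + 1) * (x + k + 2)))
      (1 / (x * (x + 1))) := by
  have hnn : ∀ k : ℕ, 0 ≤ 1 / ((x + k) * (x + k + 1)) - 1 / ((x + k + 1) * (x + k + 2)) := by
    intro k
    have h1 : (0:ℝ) < x + k := by positivity
    rw [sub_nonneg]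
    apply one_div_le_one_div_of_le (by positivity)
    nlinarith
  rw [hasSum_iff_tendsto_nat_of_nonneg hnn]
  have hps : ∀ n : ℕ, (∑ k ∈ Finset.range n,
      (1 / ((x + k) * (x + k + 1)) - 1 / ((x + k + 1) * (x + k + 2)))) =
      1 / (x * (x + 1)) - 1 / ((x + n) * (x + n + 1)) := by
    intro n
    have e := Finset.sum_congr rfl (fun k (_ : k ∈ Finset.range n) =>
      (by push_cast; ring : 1 / ((x + k) * (x + k + 1)) - 1 / ((x + k + 1) * (x + k + 2)) =
        (fun j : ℕ => 1 / ((x + j) * (x + j + 1))) k -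
        (fun j : ℕ => 1 / ((x + j) * (x + j + 1))) (k + 1)))
    rw [e, Finset.sum_range_sub']
    norm_num
  simp_rw [hps]
  have h1 : Tendsto (fun n : ℕ => (x + (n : ℝ)) * (x + n + 1)) atTop atTop := by
    have ha : Tendsto (fun n : ℕ => x + (n : ℝ)) atTop atTop :=
      tendsto_atTop_add_const_left _ _ tendsto_natCast_atTop_atTop
    have hb : Tendsto (fun n : ℕ => x + (n : ℝ) + 1) atTop atTop :=
      tendsto_atTop_add_const_right _ _ ha
    exact ha.atTop_mul_atTop₀ hb
  have h2 : Tendsto (fun n : ℕ => 1 / ((x + (n : ℝ)) * (x + n + 1))) atTop (𝓝 0) := by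
    simp_rw [one_div]
    exact h1.inv_tendsto_atTop
  have := (tendsto_const_nhds (x := 1 / (x * (x + 1))) (f := atTop (α := ℕ))).sub h2
  simpa using this

lemma TT_le {x : ℝ} (hx : 0 < x) : 1 / x - PP (x + 1) ≤ 1 / (x * (x + 1)) := by
  apply hasSum_le _ (hasSum_TT hx) (hasSum_tele2 hx)
  intro k
  have h1 : (0:ℝ) < x + k := by positivity
  have h2 : (0:ℝ) < x + k + 1 := by positivity
  have h3 : (0:ℝ) < x + k + 2 := by positivity
  have he : 1 / ((x + k) * (x + k + 1)) - 1 / ((x + k + 1) * (x + k + 2)) =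
      2 / ((x + k) * (x + k + 1) * (x + k + 2)) := by
    field_simp
    ring
  rw [he, div_le_div_iff₀ (by positivity) (by positivity)]
  nlinarith [mul_nonneg (mul_nonneg h1.le h2.le) h1.le]

-- Part 4 : measurability and dominating functions
lemma measurable_tsum_real {f : ℕ → ℝ → ℝ} (hm : ∀ k, Measurable (f k))
    (h0 : ∀ k x, 0 ≤ f k x) : Measurable fun x => ∑' k, f k x := by
  have he : (fun x => ∑' k, f k x) = fun x => (∑' k, ENNReal.ofReal (f k x)).toReal := by
    ext x
    rw [ENNReal.tsum_toReal_eq (fun a => ENNReal.ofReal_ne_top)]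
    exact tsum_congr fun k => (ENNReal.toReal_ofReal (h0 k x)).symm
  rw [he]
  exact (Measurable.ennreal_tsum fun k => (hm k).ennreal_ofReal).ennreal_toReal

lemma measurable_PP : Measurable PP := by
  apply measurable_tsum_real
  · intro k
    have : Measurable fun x : ℝ => ((x + (k:ℝ)) ^ 2)⁻¹ :=
      ((measurable_id'.add_const ((k:ℝ))).pow_const 2).inv
    simpa [one_div] using this
  · intro k x
    positivity

lemma continuous_qq : Continuous qq := by
  unfold qq
  exact (continuous_const.mul
    ((Real.continuous_sin.comp (continuous_const.mul continuous_id)).pow 2)).div_const _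

noncomputable def Kf (y : ℝ) : ℝ := qq y * (1 / y ^ 2)
noncomputable def G2 (x : ℝ) : ℝ := qq x * (1 / x - PP (x + 1))

lemma measurable_Kf : Measurable Kf := by
  unfold Kf
  refine continuous_qq.measurable.mul ?_
  have h : Measurable fun y : ℝ => ((y : ℝ) ^ 2)⁻¹ :=
    ((measurable_id : Measurable fun y : ℝ => y).pow_const 2).inv
  simpa [one_div] using h

lemma measurable_G2 : Measurable G2 := by
  unfold G2
  have h1 : Measurable fun x : ℝ => 1 / x := by
    have h : Measurable fun x : ℝ => (x : ℝ)⁻¹ :=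
      (measurable_id : Measurable fun x : ℝ => x).inv
    simpa [one_div] using h
  have h2 : Measurable fun x : ℝ => PP (x + 1) :=
    measurable_PP.comp (measurable_id'.add_const 1)
  exact continuous_qq.measurable.mul (h1.sub h2)

lemma Kf_nonneg {y : ℝ} : 0 ≤ Kf y := mul_nonneg (qq_nonneg y) (by positivity)

lemma Kf_le {y : ℝ} (hy : 0 < y) : Kf y ≤ 2 := by
  unfold Kf
  have h1 := qq_le' hy.le
  have h2 : qq y * (1 / y ^ 2) ≤ 2 * y ^ 2 * (1 / y ^ 2) :=
    mul_le_mul_of_nonneg_right h1 (by positivity)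
  have h3 : 2 * y ^ 2 * (1 / y ^ 2) = 2 := by field_simp
  linarith

lemma Kf_le' {y : ℝ} : Kf y ≤ 2 / π ^ 2 * (1 / y ^ 2) := by
  unfold Kf
  exact mul_le_mul_of_nonneg_right (qq_le y) (by positivity)

lemma G2_nonneg {x : ℝ} (hx : 0 < x) : 0 ≤ G2 x :=
  mul_nonneg (qq_nonneg x) (TT_nonneg hx)

lemma G2_le {x : ℝ} (hx : 0 < x) : G2 x ≤ 2 := by
  unfold G2
  have h1 : qq x * (1 / x - PP (x + 1)) ≤ 2 * x ^ 2 * (1 / (x * (x + 1))) :=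
    mul_le_mul (qq_le' hx.le) (TT_le hx) (TT_nonneg hx) (by positivity)
  have h2 : 2 * x ^ 2 * (1 / (x * (x + 1))) ≤ 2 := by
    rw [mul_one_div, div_le_iff₀ (by positivity)]
    nlinarith
  linarith

lemma G2_le' {x : ℝ} (hx : 0 < x) : G2 x ≤ 2 / π ^ 2 * (1 / x ^ 2) := by
  unfold G2
  apply mul_le_mul (qq_le x) _ (TT_nonneg hx) (by positivity)
  refine le_trans (TT_le hx) ?_
  apply one_div_le_one_div_of_le (by positivity)
  nlinarith

lemma integrableOn_one_div_sq : IntegrableOn (fun y : ℝ => 1 / y ^ 2) (Ioi 1) := by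
  have h := integrableOn_Ioi_rpow_of_lt (by norm_num : (-2:ℝ) < -1) (c := 1) one_pos
  apply h.congr_fun _ measurableSet_Ioi
  intro y hy
  have hy0 : (0:ℝ) < y := lt_trans one_pos hy
  show y ^ ((-2):ℝ) = 1 / y ^ 2
  rw [show ((-2):ℝ) = -((2:ℕ):ℝ) by norm_num, Real.rpow_neg hy0.le, Real.rpow_natCast, one_div]

lemma integrable_dom {f : ℝ → ℝ} (hm : AEStronglyMeasurable ((Ioi (0:ℝ)).indicator f))
    (h1 : ∀ y, 0 < y → 0 ≤ f y) (h2 : ∀ y, 0 < y → f y ≤ 2)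
    (h3 : ∀ y, 1 < y → f y ≤ 2 / π ^ 2 * (1 / y ^ 2)) :
    Integrable ((Ioi (0:ℝ)).indicator f) := by
  set W : ℝ → ℝ := fun y =>
    (Ioc (0:ℝ) 1).indicator (fun _ => (2:ℝ)) y +
      (Ioi (1:ℝ)).indicator (fun y => 2 / π ^ 2 * (1 / y ^ 2)) y with hW
  have hWint : Integrable W := by
    apply Integrable.add
    · rw [integrable_indicator_iff measurableSet_Ioc]
      refine integrableOn_const (lt_top_iff_ne_top.1 ?_)
      rw [Real.volume_Ioc]
      exact ENNReal.ofReal_lt_top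
    · rw [integrable_indicator_iff measurableSet_Ioi]
      exact integrableOn_one_div_sq.const_mul _
  apply Integrable.mono' hWint hm
  filter_upwards with y
  rw [Real.norm_eq_abs]
  by_cases hy : y ∈ Ioi (0:ℝ)
  · rw [indicator_of_mem hy, abs_of_nonneg (h1 y hy)]
    rcases le_or_gt y 1 with hc | hc
    · have : W y = 2 + 0 := by
        rw [hW]
        simp only
        rw [indicator_of_mem (by exact ⟨hy, hc⟩ : y ∈ Ioc (0:ℝ) 1),
          indicator_of_notMem (by simpa using hc)]
      rw [this, add_zero]
      exact h2 y hy
    · have : W y = 0 + 2 / π ^ 2 * (1 / y ^ 2) := by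
        rw [hW]
        simp only
        rw [indicator_of_notMem (by simp [hc.not_ge] : y ∉ Ioc (0:ℝ) 1),
          indicator_of_mem (by exact hc : y ∈ Ioi (1:ℝ))]
      rw [this, zero_add]
      exact h3 y hc
  · rw [indicator_of_notMem hy, abs_zero, hW]
    have hy1 : y ∉ Ioi (1:ℝ) := fun h => hy (show (0:ℝ) < y from lt_trans one_pos (show (1:ℝ) < y from h))
    have hnn : (0:ℝ) ≤ (Ioc (0:ℝ) 1).indicator (fun _ => (2:ℝ)) y :=
      indicator_nonneg (fun _ _ => by norm_num) y
    have hnn2 : (0:ℝ) ≤ (Ioi (1:ℝ)).indicator (fun y => 2 / π ^ 2 * (1 / y ^ 2)) y :=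
      indicator_nonneg (fun z _ => by positivity) y
    simp only
    linarith

lemma integrableOn_Kf : IntegrableOn Kf (Ioi (0:ℝ)) := by
  rw [← integrable_indicator_iff measurableSet_Ioi]
  exact integrable_dom
    ((measurable_Kf.indicator measurableSet_Ioi).aestronglyMeasurable)
    (fun y _ => Kf_nonneg) (fun y hy => Kf_le hy) (fun y _ => Kf_le')

lemma integrableOn_G2 : IntegrableOn G2 (Ioi (0:ℝ)) := by
  rw [← integrable_indicator_iff measurableSet_Ioi]
  exact integrable_dom
    ((measurable_G2.indicator measurableSet_Ioi).aestronglyMeasurable)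
    (fun y hy => G2_nonneg hy) (fun y hy => G2_le hy)
    (fun y hy => G2_le' (lt_trans one_pos hy))

-- Part 5 : ∫_{Ioi 0} Kf = 1
lemma integrable_indicator_bdd {f : ℝ → ℝ} {a b C : ℝ} (hC : 0 ≤ C)
    (hm : AEStronglyMeasurable ((Ioc a b).indicator f))
    (hb : ∀ y ∈ Ioc a b, |f y| ≤ C) : Integrable ((Ioc a b).indicator f) := by
  have hint : Integrable ((Ioc a b).indicator (fun _ => C)) := by
    rw [integrable_indicator_iff measurableSet_Ioc]
    refine integrableOn_const (lt_top_iff_ne_top.1 ?_)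
    rw [Real.volume_Ioc]
    exact ENNReal.ofReal_lt_top
  apply Integrable.mono' hint hm
  filter_upwards with y
  rw [Real.norm_eq_abs]
  by_cases hy : y ∈ Ioc a b
  · rw [indicator_of_mem hy, indicator_of_mem hy]
    exact hb y hy
  · rw [indicator_of_notMem hy, indicator_of_notMem hy, abs_zero]

lemma Kf_shift (n : ℕ) :
    (∫ y in Ioc (0:ℝ) 1, Kf (y + n)) = ∫ y in Ioc (n:ℝ) (n + 1), Kf y := by
  have key : ∀ y : ℝ, (Ioc (0:ℝ) 1).indicator (fun y => Kf (y + n)) y =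
      (Ioc (n:ℝ) (n + 1)).indicator Kf (y + n) := by
    intro y
    by_cases h : y ∈ Ioc (0:ℝ) 1
    · rw [indicator_of_mem h, indicator_of_mem (by
        constructor
        · linarith [h.1]
        · linarith [h.2])]
    · rw [indicator_of_notMem h, indicator_of_notMem (by
        intro hc
        exact h ⟨by linarith [hc.1], by linarith [hc.2]⟩)]
  rw [← integral_indicator measurableSet_Ioc, ← integral_indicator measurableSet_Ioc]
  calc (∫ y, (Ioc (0:ℝ) 1).indicator (fun y => Kf (y + n)) y)
      = ∫ y, (Ioc (n:ℝ) (n + 1)).indicator Kf (y + n) := by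
        apply integral_congr_ae
        filter_upwards with y
        exact key y
    _ = ∫ y, (Ioc (n:ℝ) (n + 1)).indicator Kf y :=
        integral_add_right_eq_self _ _

lemma iUnion_Ioc_eq : (⋃ n : ℕ, Ioc ((n:ℝ)) (n + 1)) = Ioi (0:ℝ) := by
  ext x
  simp only [mem_iUnion, mem_Ioc, mem_Ioi]
  constructor
  · rintro ⟨n, h1, _⟩
    have : (0:ℝ) ≤ n := Nat.cast_nonneg n
    linarith
  · intro hx
    refine ⟨⌈x⌉₊ - 1, ?_, ?_⟩
    · have h1 : 1 ≤ ⌈x⌉₊ := Nat.one_le_ceil_iff.2 hx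
      have h2 : ((⌈x⌉₊ : ℝ)) < x + 1 := Nat.ceil_lt_add_one hx.le
      have h3 : ((⌈x⌉₊ - 1 : ℕ) : ℝ) = (⌈x⌉₊ : ℝ) - 1 := by
        push_cast [Nat.cast_sub h1]
        ring
      rw [h3]
      linarith
    · have h1 : 1 ≤ ⌈x⌉₊ := Nat.one_le_ceil_iff.2 hx
      have h3 : ((⌈x⌉₊ - 1 : ℕ) : ℝ) = (⌈x⌉₊ : ℝ) - 1 := by
        push_cast [Nat.cast_sub h1]
        ring
      rw [h3]
      linarith [Nat.le_ceil x]

lemma pairwise_disjoint_Ioc : Pairwise (Function.onFun Disjoint (fun n : ℕ => Ioc ((n:ℝ)) (n + 1))) := by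
  intro m n hmn
  apply Set.Ioc_disjoint_Ioc.2
  rcases lt_or_gt_of_ne hmn with h | h
  · have : ((m:ℝ)) + 1 ≤ n := by exact_mod_cast Nat.succ_le_of_lt h
    exact le_trans (min_le_left _ _) (le_trans this (le_max_right _ _))
  · have : ((n:ℝ)) + 1 ≤ m := by exact_mod_cast Nat.succ_le_of_lt h
    exact le_trans (min_le_right _ _) (le_trans this (le_max_left _ _))

lemma intKf_sum : (∫ y in Ioi (0:ℝ), Kf y) = ∑' n : ℕ, ∫ y in Ioc ((n:ℝ)) (n + 1), Kf y := by
  rw [← iUnion_Ioc_eq]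
  exact integral_iUnion (fun n => measurableSet_Ioc) pairwise_disjoint_Ioc
    (iUnion_Ioc_eq ▸ integrableOn_Kf)

lemma qqPP_bdd : ∀ y ∈ Icc (0:ℝ) 1, |qq y * PP y| ≤ 5 := by
  intro y hy
  rcases eq_or_lt_of_le hy.1 with h | h
  · have : qq 0 = 0 := by
      unfold qq
      norm_num
    rw [← h, this]
    norm_num
  · have hP : PP y = 1 / y ^ 2 + PP (y + 1) := PP_succ y
    have h1 : qq y * PP y = Kf y + qq y * PP (y + 1) := by
      rw [hP]
      unfold Kf
      ring
    have h2 : Kf y ≤ 2 := Kf_le h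
    have h3 : PP (y + 1) ≤ 3 := by
      have := PP_le (x := y + 1) (by linarith)
      have h4 : 1 / (y + 1) ^ 2 ≤ 1 := by
        rw [div_le_one (by positivity)]
        nlinarith
      linarith
    have h5 : qq y ≤ 1 := by
      have := qq_le y
      have hpi : (3:ℝ) ≤ π := by linarith [Real.pi_gt_three]
      have : 2 / π ^ 2 ≤ 1 := by
        rw [div_le_one (by positivity)]
        nlinarith
      linarith [qq_le y]
    have h6 : 0 ≤ qq y * PP (y + 1) := mul_nonneg (qq_nonneg y) (PP_nonneg _)
    have h7 : qq y * PP (y + 1) ≤ 3 := by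
      calc qq y * PP (y + 1) ≤ 1 * PP (y + 1) :=
            mul_le_mul_of_nonneg_right h5 (PP_nonneg _)
        _ ≤ 3 := by linarith
    rw [h1, abs_of_nonneg (add_nonneg Kf_nonneg h6)]
    linarith [Kf_nonneg (y := y)]

lemma integrableOn_qqPP : IntegrableOn (fun y => qq y * PP y) (Icc (0:ℝ) 1) := by
  have hm : Measurable fun y => qq y * PP y := continuous_qq.measurable.mul measurable_PP
  have h := integrable_indicator_bdd (a := (0:ℝ)) (b := 1) (C := 5) (by norm_num)
    ((hm.indicator measurableSet_Ioc).aestronglyMeasurable)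
    (fun y hy => qqPP_bdd y ⟨hy.1.le, hy.2⟩)
  have h2 : IntegrableOn (fun y => qq y * PP y) (Ioc (0:ℝ) 1) :=
    (integrable_indicator_iff measurableSet_Ioc).1 h
  have h0 : IntegrableOn (fun y => qq y * PP y) {(0:ℝ)} := by
    have hz : volume.restrict {(0:ℝ)} = 0 := by
      rw [Measure.restrict_eq_zero]
      exact measure_singleton _
    rw [IntegrableOn, hz]
    exact integrable_zero_measure
  have : Icc (0:ℝ) 1 = {(0:ℝ)} ∪ Ioc (0:ℝ) 1 := by
    ext z
    simp only [mem_Icc, mem_union, mem_singleton_iff, mem_Ioc]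
    constructor
    · rintro ⟨h1, h2⟩
      rcases eq_or_lt_of_le h1 with h | h
      · exact Or.inl h.symm
      · exact Or.inr ⟨h, h2⟩
    · rintro (h | h)
      · simp [h]
      · exact ⟨h.1.le, h.2⟩
  rw [this]
  exact h0.union h2

lemma qq_one_sub (y : ℝ) : qq (1 - y) = qq y := by
  unfold qq
  rw [show π * (1 - y) = π - π * y by ring, Real.sin_pi_sub]

lemma not_int_of_Ioo {y : ℝ} (hy : y ∈ Ioo (0:ℝ) 1) : ∀ m : ℤ, y ≠ (m : ℝ) := by
  intro m hm
  have h1 : (0:ℝ) < m := hm ▸ hy.1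
  have h2 : ((m:ℝ)) < 1 := hm ▸ hy.2
  have h3 : (0:ℤ) < m := by exact_mod_cast h1
  have h4 : m < 1 := by exact_mod_cast h2
  omega

lemma integral_qqPP_symm :
    (∫ y in Ioc (0:ℝ) 1, qq y * PP (1 - y)) = ∫ y in Ioc (0:ℝ) 1, qq y * PP y := by
  set F : ℝ → ℝ := fun z => qq z * PP z with hF
  set I : ℝ → ℝ := (Ico (0:ℝ) 1).indicator F with hI
  have hpt : ∀ y : ℝ, (Ioc (0:ℝ) 1).indicator (fun y => F (1 - y)) y = I (1 - y) := by
    intro y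
    by_cases h : y ∈ Ioc (0:ℝ) 1
    · have h' := mem_Ioc.1 h
      rw [indicator_of_mem h, hI, indicator_of_mem (mem_Ico.2 ⟨by linarith [h'.2], by linarith [h'.1]⟩)]
    · rw [indicator_of_notMem h, hI, indicator_of_notMem]
      intro hc
      have hc' := mem_Ico.1 hc
      exact h (mem_Ioc.2 ⟨by linarith [hc'.2], by linarith [hc'.1]⟩)
  have e0 : ∀ y : ℝ, qq y * PP (1 - y) = F (1 - y) := by
    intro y
    rw [hF]
    simp only
    rw [qq_one_sub]
  calc (∫ y in Ioc (0:ℝ) 1, qq y * PP (1 - y))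
      = ∫ y in Ioc (0:ℝ) 1, F (1 - y) := by
        apply setIntegral_congr_fun measurableSet_Ioc
        intro y _
        exact e0 y
    _ = ∫ y, (Ioc (0:ℝ) 1).indicator (fun y => F (1 - y)) y :=
        (integral_indicator measurableSet_Ioc).symm
    _ = ∫ y, I (1 - y) := by
        apply integral_congr_ae
        filter_upwards with y
        exact hpt y
    _ = ∫ y, I ((-y) + 1) := by
        apply integral_congr_ae
        filter_upwards with y
        rw [show 1 - y = -y + 1 by ring]
    _ = ∫ y, I (y + 1) := integral_neg_eq_self (fun t : ℝ => I (t + 1)) volume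
    _ = ∫ y, I y := integral_add_right_eq_self _ _
    _ = ∫ y in Ico (0:ℝ) 1, F y := integral_indicator measurableSet_Ico
    _ = ∫ y in Ioo (0:ℝ) 1, F y := integral_Ico_eq_integral_Ioo
    _ = ∫ y in Ioc (0:ℝ) 1, F y := integral_Ioc_eq_integral_Ioo.symm

lemma integrableOn_qqPP_symm : IntegrableOn (fun y => qq y * PP (1 - y)) (Ioc (0:ℝ) 1) := by
  set F : ℝ → ℝ := fun z => qq z * PP z with hF
  set I : ℝ → ℝ := (Ico (0:ℝ) 1).indicator F with hI
  have hIint : Integrable I := by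
    rw [hI, integrable_indicator_iff measurableSet_Ico]
    exact integrableOn_qqPP.mono_set Ico_subset_Icc_self
  have h1 : Integrable fun y => I (1 - y) := hIint.comp_sub_left 1
  rw [← integrable_indicator_iff measurableSet_Ioc]
  apply h1.congr
  filter_upwards with y
  have hpt : (Ioc (0:ℝ) 1).indicator (fun y => F (1 - y)) y = I (1 - y) := by
    by_cases h : y ∈ Ioc (0:ℝ) 1
    · have h' := mem_Ioc.1 h
      rw [indicator_of_mem h, hI, indicator_of_mem (mem_Ico.2 ⟨by linarith [h'.2], by linarith [h'.1]⟩)]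
    · rw [indicator_of_notMem h, hI, indicator_of_notMem]
      intro hc
      have hc' := mem_Ico.1 hc
      exact h (mem_Ioc.2 ⟨by linarith [hc'.2], by linarith [hc'.1]⟩)
  rw [← hpt]
  by_cases h : y ∈ Ioc (0:ℝ) 1
  · rw [indicator_of_mem h, indicator_of_mem h, hF]
    simp only
    rw [qq_one_sub]
  · rw [indicator_of_notMem h, indicator_of_notMem h]

lemma integral_qqPP : (∫ y in Ioc (0:ℝ) 1, qq y * PP y) = 1 := by
  have hi1 : IntegrableOn (fun y => qq y * PP y) (Ioc (0:ℝ) 1) :=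
    integrableOn_qqPP.mono_set Ioc_subset_Icc_self
  have hi2 := integrableOn_qqPP_symm
  have hsum : (∫ y in Ioc (0:ℝ) 1, (qq y * PP y + qq y * PP (1 - y))) = 2 := by
    have he : (∫ y in Ioc (0:ℝ) 1, (qq y * PP y + qq y * PP (1 - y))) =
        ∫ y in Ioo (0:ℝ) 1, (qq y * PP y + qq y * PP (1 - y)) :=
      integral_Ioc_eq_integral_Ioo
    rw [he]
    have hconst : (∫ y in Ioo (0:ℝ) 1, (qq y * PP y + qq y * PP (1 - y))) =
        ∫ _ in Ioo (0:ℝ) 1, (2:ℝ) := by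
      apply setIntegral_congr_fun measurableSet_Ioo
      intro y hy
      have hni := not_int_of_Ioo hy
      have := qq_mul_DD hni
      unfold DD at this
      simp only
      linarith [this]
    rw [hconst, setIntegral_const]
    rw [Real.volume_real_Ioo]
    norm_num
  rw [integral_add hi1 hi2, integral_qqPP_symm] at hsum
  linarith

lemma Kf_Ioc_bound (n : ℕ) :
    (∫ y, ‖(Ioc (0:ℝ) 1).indicator (fun y => Kf (y + n)) y‖) ≤
      if n = 0 then 2 else 2 / π ^ 2 * (1 / (n:ℝ) ^ 2) := by
  set c : ℝ := if n = 0 then 2 else 2 / π ^ 2 * (1 / (n:ℝ) ^ 2) with hc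
  have hc0 : 0 ≤ c := by
    rw [hc]
    split <;> positivity
  have hbd : ∀ y, ‖(Ioc (0:ℝ) 1).indicator (fun y => Kf (y + n)) y‖ ≤
      (Ioc (0:ℝ) 1).indicator (fun _ => c) y := by
    intro y
    rw [Real.norm_eq_abs]
    by_cases h : y ∈ Ioc (0:ℝ) 1
    · rw [indicator_of_mem h, indicator_of_mem h, abs_of_nonneg Kf_nonneg]
      rcases Nat.eq_zero_or_pos n with h0 | h0
      · rw [hc, if_pos h0]
        subst h0
        simpa using Kf_le (by simpa using h.1)
      · rw [hc, if_neg (Nat.pos_iff_ne_zero.1 h0)]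
        calc Kf (y + n) ≤ 2 / π ^ 2 * (1 / (y + n) ^ 2) := Kf_le'
          _ ≤ 2 / π ^ 2 * (1 / (n:ℝ) ^ 2) := by
              apply mul_le_mul_of_nonneg_left _ (by positivity)
              apply one_div_le_one_div_of_le
              · have : (1:ℝ) ≤ (n:ℝ) := by exact_mod_cast h0
                positivity
              · nlinarith [h.1.le, Nat.cast_nonneg (α := ℝ) n]
    · rw [indicator_of_notMem h, indicator_of_notMem h, abs_zero]
  have hcint : Integrable ((Ioc (0:ℝ) 1).indicator (fun _ => c)) := by
    rw [integrable_indicator_iff measurableSet_Ioc]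
    exact integrableOn_const (lt_top_iff_ne_top.1 (by rw [Real.volume_Ioc]; exact ENNReal.ofReal_lt_top))
  have hKint : Integrable ((Ioc (0:ℝ) 1).indicator fun y => Kf (y + n)) := by
    apply integrable_indicator_bdd hc0
    · exact ((measurable_Kf.comp (measurable_id'.add_const _)).indicator
        measurableSet_Ioc).aestronglyMeasurable
    · intro y hy
      rw [abs_of_nonneg Kf_nonneg]
      have := hbd y
      rwa [Real.norm_eq_abs, indicator_of_mem hy, indicator_of_mem hy,
        abs_of_nonneg Kf_nonneg] at this
  calc (∫ y, ‖(Ioc (0:ℝ) 1).indicator (fun y => Kf (y + n)) y‖)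
      ≤ ∫ y, (Ioc (0:ℝ) 1).indicator (fun _ => c) y :=
        integral_mono hKint.norm hcint hbd
    _ = c := by
        rw [integral_indicator_const _ measurableSet_Ioc, Real.volume_real_Ioc]
        norm_num

lemma summable_Kf_ints :
    Summable (fun n : ℕ => ∫ y, ‖(Ioc (0:ℝ) 1).indicator (fun y => Kf (y + n)) y‖) := by
  have hnn : ∀ n : ℕ, 0 ≤ ∫ y, ‖(Ioc (0:ℝ) 1).indicator (fun y => Kf (y + n)) y‖ :=
    fun n => integral_nonneg (fun y => norm_nonneg _)
  apply (summable_nat_add_iff 1).mp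
  apply Summable.of_nonneg_of_le (fun n => hnn (n + 1)) _
    (base_summable.mul_left (2 / π ^ 2))
  intro n
  have h := Kf_Ioc_bound (n + 1)
  rw [if_neg (Nat.succ_ne_zero n)] at h
  calc (∫ y, ‖(Ioc (0:ℝ) 1).indicator (fun y => Kf (y + (n + 1 : ℕ))) y‖)
      ≤ 2 / π ^ 2 * (1 / ((n + 1 : ℕ) : ℝ) ^ 2) := h
    _ = 2 / π ^ 2 * (1 / ((n : ℝ) + 1) ^ 2) := by push_cast; ring

lemma intKf : (∫ y in Ioi (0:ℝ), Kf y) = 1 := by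
  rw [intKf_sum]
  have hInt : ∀ n : ℕ, Integrable ((Ioc (0:ℝ) 1).indicator (fun y => Kf (y + n))) := by
    intro n
    apply integrable_indicator_bdd (C := 2) (by norm_num)
    · exact ((measurable_Kf.comp (measurable_id'.add_const _)).indicator
        measurableSet_Ioc).aestronglyMeasurable
    · intro y hy
      rw [abs_of_nonneg Kf_nonneg]
      have h1 : (0:ℝ) < y + n := by
        have := (mem_Ioc.1 hy).1
        have := Nat.cast_nonneg (α := ℝ) n
        linarith
      exact Kf_le h1
  have hswap := integral_tsum_of_summable_integral_norm hInt summable_Kf_ints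
  have hptsum : ∀ y : ℝ, (∑' n : ℕ, (Ioc (0:ℝ) 1).indicator (fun y => Kf (y + n)) y) =
      (Ioc (0:ℝ) 1).indicator (fun y => qq y * PP y) y := by
    intro y
    by_cases h : y ∈ Ioc (0:ℝ) 1
    · rw [indicator_of_mem h]
      have he : ∀ n : ℕ, (Ioc (0:ℝ) 1).indicator (fun y => Kf (y + n)) y =
          qq y * (1 / (y + n) ^ 2) := by
        intro n
        rw [indicator_of_mem h]
        unfold Kf
        rw [qq_per_nat]
      rw [tsum_congr he, tsum_mul_left]
      rfl
    · rw [indicator_of_notMem h]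
      have he : ∀ n : ℕ, (Ioc (0:ℝ) 1).indicator (fun y => Kf (y + n)) y = 0 :=
        fun n => indicator_of_notMem h _
      rw [tsum_congr he, tsum_zero]
  calc (∑' n : ℕ, ∫ y in Ioc ((n:ℝ)) (n + 1), Kf y)
      = ∑' n : ℕ, ∫ y, (Ioc (0:ℝ) 1).indicator (fun y => Kf (y + n)) y :=
        tsum_congr (fun n => by rw [← Kf_shift n, ← integral_indicator measurableSet_Ioc])
    _ = ∫ y, ∑' n : ℕ, (Ioc (0:ℝ) 1).indicator (fun y => Kf (y + n)) y := hswap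
    _ = ∫ y, (Ioc (0:ℝ) 1).indicator (fun y => qq y * PP y) y := by
        apply integral_congr_ae
        filter_upwards with y
        exact hptsum y
    _ = ∫ y in Ioc (0:ℝ) 1, qq y * PP y := integral_indicator measurableSet_Ioc
    _ = 1 := integral_qqPP

-- Part 6 : identities for Bplus, Bminus
lemma Bplus_formula {x : ℝ} (hx : ¬∃ n : ℕ, x = (n : ℝ)) :
    Bplus x = qq x * (PP (-x) + 1 / x) - 1 := by
  rw [Bplus, if_neg hx]
  have ht : (∑' k : ℕ, 1 / (x - (k : ℝ)) ^ 2) = PP (-x) := by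
    rw [PP]
    apply tsum_congr
    intro k
    rw [show (x - (k:ℝ)) ^ 2 = (-x + k) ^ 2 by ring]
  rw [ht]
  rfl

lemma qq_neg (x : ℝ) : qq (-x) = qq x := by
  unfold qq
  rw [show π * -x = -(π * x) by ring, Real.sin_neg, neg_sq]

lemma sin_pi_neg_nat (m : ℕ) : Real.sin (π * -(m:ℝ)) = 0 := by
  have h := Real.sin_int_mul_pi (-(m:ℤ))
  rw [show ((-(m:ℤ) : ℤ) : ℝ) * π = π * -(m:ℝ) by push_cast; ring] at h
  exact h

lemma GG_plus_eq {x : ℝ} (hx : ∀ m : ℤ, x ≠ (m:ℝ)) (hpos : 0 < x) :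
    Bplus x - 1 = G2 x := by
  have hnn : ¬∃ n : ℕ, x = (n : ℝ) := by
    rintro ⟨n, rfl⟩
    exact hx n rfl
  rw [Bplus_formula hnn]
  have hPP : PP (-x) + PP (x + 1) = DD x := by
    have h1 := PP_neg x
    have h2 := PP_succ x
    unfold DD
    linarith
  have key : qq x * DD x = 2 := qq_mul_DD hx
  rw [← hPP] at key
  unfold G2
  linear_combination key

lemma GG_minus_eq {x : ℝ} (hneg : x < 0) :
    Bplus x + 1 = Kf (-x) - G2 (-x) := by
  have hnn : ¬∃ n : ℕ, x = (n : ℝ) := by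
    rintro ⟨n, rfl⟩
    have : (0:ℝ) ≤ n := Nat.cast_nonneg n
    linarith
  rw [Bplus_formula hnn]
  unfold Kf G2
  rw [qq_neg, neg_sq, show -x + 1 = 1 - x by ring]
  have h1 : 1 / (-x) = -(1 / x) := by
    rw [div_neg]
  rw [h1]
  have h2 := PP_neg x
  linear_combination (qq x) * h2

lemma Bminus_eq_neg (x : ℝ) : Bminus x = -Bplus (-x) := by
  by_cases h : ∃ n : ℕ, 0 < n ∧ x = (n : ℝ)
  · obtain ⟨n, hn, rfl⟩ := h
    rw [Bminus, if_pos ⟨n, hn, rfl⟩, Bplus, if_neg ?_]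
    · rw [show π * -(n:ℝ) = π * -(n:ℝ) by rfl]
      rw [sin_pi_neg_nat n]
      norm_num
    · rintro ⟨m, hm⟩
      have h1 : (0:ℝ) ≤ m := Nat.cast_nonneg m
      have h2 : (1:ℝ) ≤ n := by exact_mod_cast hn
      linarith [hm]
  · rw [Bminus, if_neg h]
    by_cases h2 : ∃ m : ℕ, -x = (m : ℝ)
    · obtain ⟨m, hm⟩ := h2
      rw [Bplus, if_pos ⟨m, hm⟩]
      have hx : x = -(m:ℝ) := by linarith [hm]
      have hsin : Real.sin (π * x) = 0 := by
        rw [hx]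
        exact sin_pi_neg_nat m
      rw [hsin]
      norm_num
    · rw [Bplus, if_neg h2]
      have hnotint : ∀ k : ℤ, x ≠ (k:ℝ) := by
        intro k hk
        rcases lt_trichotomy k 0 with hlt | heq | hgt
        · apply h2
          refine ⟨(-k).toNat, ?_⟩
          rw [hk]
          have h5 : (((-k).toNat : ℤ)) = -k := Int.toNat_of_nonneg (by omega)
          exact_mod_cast congrArg (Int.cast : ℤ → ℝ) h5.symm
        · apply h2
          exact ⟨0, by rw [hk, heq]; norm_num⟩
        · apply h
          refine ⟨k.toNat, by omega, ?_⟩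
          rw [hk]
          congr 1
          exact_mod_cast (Int.toNat_of_nonneg (by omega : (0:ℤ) ≤ k)).symm
      have ht1 : (∑' k : ℕ, 1 / (x - ((k : ℝ) + 1)) ^ 2) = PP (1 - x) := by
        rw [PP]
        apply tsum_congr
        intro k
        rw [show (x - ((k:ℝ) + 1)) ^ 2 = (1 - x + k) ^ 2 by ring]
      have ht2 : (∑' k : ℕ, 1 / (-x - (k : ℝ)) ^ 2) = PP x := by
        rw [PP]
        apply tsum_congr
        intro k
        rw [show (-x - (k:ℝ)) ^ 2 = (x + k) ^ 2 by ring]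
      rw [ht1, ht2]
      rw [show π * -x = -(π * x) by ring, Real.sin_neg, neg_sq]
      have key : qq x * DD x = 2 := qq_mul_DD hnotint
      unfold qq DD at key
      have h3 : 1 / (-x) = -(1 / x) := by rw [div_neg]
      rw [h3]
      linear_combination key

noncomputable def sg (x : ℝ) : ℝ := if 0 ≤ x then 1 else -1

noncomputable def GG (x : ℝ) : ℝ := Bplus x - sg x

noncomputable def Gsum (x : ℝ) : ℝ :=
  (Ioi (0:ℝ)).indicator G2 x + (Iio (0:ℝ)).indicator (fun x => Kf (-x) - G2 (-x)) x

lemma GG_eq_Gsum {x : ℝ} (hx : ∀ m : ℤ, x ≠ (m:ℝ)) : GG x = Gsum x := by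
  have hx0 : x ≠ 0 := by
    intro h
    exact hx 0 (by rw [h]; norm_num)
  rcases lt_or_gt_of_ne hx0 with hneg | hpos
  · unfold GG Gsum sg
    rw [if_neg (not_le.2 hneg), indicator_of_notMem (by simpa using hneg.le.not_gt ∘ fun h => h),
      indicator_of_mem (by exact hneg : x ∈ Iio (0:ℝ))]
    have := GG_minus_eq hneg
    linarith
  · unfold GG Gsum sg
    rw [if_pos hpos.le, indicator_of_mem (by exact hpos : x ∈ Ioi (0:ℝ)),
      indicator_of_notMem (by simpa using hpos.le)]
    have := GG_plus_eq hx hpos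
    linarith

-- Part 7 : integrability and integral of GG
lemma indicator_reflect (x : ℝ) :
    (Iio (0:ℝ)).indicator (fun x => Kf (-x) - G2 (-x)) x =
      ((Ioi (0:ℝ)).indicator (fun y => Kf y - G2 y)) (-x) := by
  by_cases h : x ∈ Iio (0:ℝ)
  · rw [indicator_of_mem h, indicator_of_mem (by simpa using h)]
  · rw [indicator_of_notMem h, indicator_of_notMem (by simpa using h)]

lemma integrable_ind_G2 : Integrable ((Ioi (0:ℝ)).indicator G2) :=
  (integrable_indicator_iff measurableSet_Ioi).2 integrableOn_G2

lemma integrable_ind_KfG2 : Integrable ((Ioi (0:ℝ)).indicator (fun y => Kf y - G2 y)) :=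
  (integrable_indicator_iff measurableSet_Ioi).2 (integrableOn_Kf.sub integrableOn_G2)

lemma integrable_part2 : Integrable ((Iio (0:ℝ)).indicator (fun x => Kf (-x) - G2 (-x))) := by
  have h := integrable_ind_KfG2.comp_neg
  apply h.congr
  filter_upwards with x
  exact (indicator_reflect x).symm

lemma integrable_Gsum : Integrable Gsum :=
  integrable_ind_G2.add integrable_part2

lemma int_Gsum : (∫ x, Gsum x) = 1 := by
  unfold Gsum
  rw [integral_add integrable_ind_G2 integrable_part2]
  have h1 : (∫ x, (Ioi (0:ℝ)).indicator G2 x) = ∫ x in Ioi (0:ℝ), G2 x :=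
    integral_indicator measurableSet_Ioi
  have h2 : (∫ x, (Iio (0:ℝ)).indicator (fun x => Kf (-x) - G2 (-x)) x) =
      ∫ x in Ioi (0:ℝ), (Kf x - G2 x) := by
    calc (∫ x, (Iio (0:ℝ)).indicator (fun x => Kf (-x) - G2 (-x)) x)
        = ∫ x, ((Ioi (0:ℝ)).indicator (fun y => Kf y - G2 y)) (-x) := by
          apply integral_congr_ae
          filter_upwards with x
          exact indicator_reflect x
      _ = ∫ x, ((Ioi (0:ℝ)).indicator (fun y => Kf y - G2 y)) x :=
          integral_neg_eq_self _ volume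
      _ = ∫ x in Ioi (0:ℝ), (Kf x - G2 x) := integral_indicator measurableSet_Ioi
  rw [h1, h2, integral_sub integrableOn_Kf integrableOn_G2, intKf]
  ring

lemma bad_null : volume {x : ℝ | ∃ m : ℤ, x = (m:ℝ)} = 0 := by
  have he : {x : ℝ | ∃ m : ℤ, x = (m:ℝ)} = Set.range (fun m : ℤ => (m:ℝ)) := by
    ext x
    simp [eq_comm]
  rw [he]
  exact (Set.countable_range _).measure_zero _

lemma GG_ae : GG =ᵐ[volume] Gsum := by
  have h := measure_eq_zero_iff_ae_notMem.mp bad_null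
  filter_upwards [h] with x hx
  exact GG_eq_Gsum (fun m hm => hx ⟨m, hm⟩)

lemma integrable_GG : Integrable GG := integrable_Gsum.congr GG_ae.symm

lemma int_GG : (∫ x, GG x) = 1 := by
  rw [integral_congr_ae GG_ae]
  exact int_Gsum

-- Part 8 : final assembly
lemma sg_comb_plus {δ : ℝ} (hδ : 0 < δ) (x : ℝ) :
    sg (δ + x) / 2 + sg (δ - x) / 2 = (Icc (-δ) δ).indicator (fun _ => (1:ℝ)) x := by
  unfold sg
  by_cases hm : x ∈ Icc (-δ) δ
  · rw [indicator_of_mem hm]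
    have h := mem_Icc.1 hm
    rw [if_pos (by linarith [h.1]), if_pos (by linarith [h.2])]
    norm_num
  · rw [indicator_of_notMem hm]
    rw [mem_Icc] at hm
    push_neg at hm
    by_cases hx1 : -δ ≤ x
    · have hx2 : δ < x := hm hx1
      rw [if_pos (by linarith), if_neg (by linarith)]
      norm_num
    · push_neg at hx1
      rw [if_neg (by linarith), if_pos (by linarith)]
      norm_num

lemma sg_comb_minus {δ : ℝ} (hδ : 0 < δ) (x : ℝ) :
    -(sg (-δ - x) / 2 + sg (x - δ) / 2) = (Ioo (-δ) δ).indicator (fun _ => (1:ℝ)) x := by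
  unfold sg
  by_cases hm : x ∈ Ioo (-δ) δ
  · rw [indicator_of_mem hm]
    have h := mem_Ioo.1 hm
    rw [if_neg (by linarith [h.1]), if_neg (by linarith [h.2])]
    norm_num
  · rw [indicator_of_notMem hm]
    rw [mem_Ioo] at hm
    push_neg at hm
    by_cases hx1 : -δ < x
    · have hx2 : δ ≤ x := hm hx1
      rw [if_neg (by linarith), if_pos (by linarith)]
      norm_num
    · push_neg at hx1
      rw [if_pos (by linarith), if_neg (by linarith)]
      norm_num

lemma phiPlus_decomp {δ : ℝ} (hδ : 0 < δ) (x : ℝ) :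
    phiPlus δ x = GG (δ + x) / 2 + GG (δ - x) / 2 +
      (Icc (-δ) δ).indicator (fun _ => (1:ℝ)) x := by
  unfold phiPlus
  rw [← sg_comb_plus hδ x]
  unfold GG
  ring

lemma phiMinus_decomp {δ : ℝ} (hδ : 0 < δ) (x : ℝ) :
    phiMinus δ x = -GG (-δ - x) / 2 - GG (x - δ) / 2 +
      (Ioo (-δ) δ).indicator (fun _ => (1:ℝ)) x := by
  unfold phiMinus
  rw [Bminus_eq_neg (δ + x), Bminus_eq_neg (δ - x),
    show -(δ + x) = -δ - x by ring, show -(δ - x) = x - δ by ring,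
    ← sg_comb_minus hδ x]
  unfold GG
  ring

lemma int_GG_shift (a : ℝ) : (∫ x, GG (a + x)) = 1 := by
  rw [integral_add_left_eq_self GG a]
  exact int_GG

lemma integrable_GG_rev (a : ℝ) : Integrable (fun x => GG (a - x)) :=
  integrable_GG.comp_sub_left a

lemma int_GG_rev (a : ℝ) : (∫ x, GG (a - x)) = 1 := by
  have h1 : (∫ x, GG (a - x)) = ∫ x, (fun t => GG (a + t)) (-x) := by
    apply integral_congr_ae
    filter_upwards with x
    rw [sub_eq_add_neg]
  rw [h1, integral_neg_eq_self (fun t => GG (a + t)) volume]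
  exact int_GG_shift a

lemma int_GG_sub (a : ℝ) : (∫ x, GG (x - a)) = 1 := by
  rw [integral_sub_right_eq_self GG a]
  exact int_GG

lemma integrable_ind_Icc {δ : ℝ} : Integrable ((Icc (-δ) δ).indicator (fun _ => (1:ℝ))) := by
  rw [integrable_indicator_iff measurableSet_Icc]
  exact integrableOn_const (lt_top_iff_ne_top.1 (by rw [Real.volume_Icc]; exact ENNReal.ofReal_lt_top))

lemma integrable_ind_Ioo {δ : ℝ} : Integrable ((Ioo (-δ) δ).indicator (fun _ => (1:ℝ))) := by
  rw [integrable_indicator_iff measurableSet_Ioo]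
  exact integrableOn_const (lt_top_iff_ne_top.1 (by rw [Real.volume_Ioo]; exact ENNReal.ofReal_lt_top))

lemma int_ind_Icc {δ : ℝ} (hδ : 0 < δ) :
    (∫ x, (Icc (-δ) δ).indicator (fun _ => (1:ℝ)) x) = 2 * δ := by
  rw [integral_indicator_const (1:ℝ) measurableSet_Icc, Real.volume_real_Icc_of_le (by linarith), smul_eq_mul, mul_one]
  ring

lemma int_ind_Ioo {δ : ℝ} (hδ : 0 < δ) :
    (∫ x, (Ioo (-δ) δ).indicator (fun _ => (1:ℝ)) x) = 2 * δ := by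
  rw [integral_indicator_const (1:ℝ) measurableSet_Ioo, Real.volume_real_Ioo_of_le (by linarith), smul_eq_mul, mul_one]
  ring

theorem phiPlus_phiMinus_integral' (δ : ℝ) (hδ : 0 < δ) :
    MeasureTheory.Integrable (phiPlus δ) ∧
    MeasureTheory.Integrable (phiMinus δ) ∧
    (∫ x : ℝ, phiPlus δ x) = 2 * δ + 1 ∧
    (∫ x : ℝ, phiMinus δ x) = 2 * δ - 1 := by
  have hplus : phiPlus δ = fun x => GG (δ + x) / 2 + GG (δ - x) / 2 +
      (Icc (-δ) δ).indicator (fun _ => (1:ℝ)) x := funext (phiPlus_decomp hδ)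
  have hminus : phiMinus δ = fun x => -GG (-δ - x) / 2 - GG (x - δ) / 2 +
      (Ioo (-δ) δ).indicator (fun _ => (1:ℝ)) x := funext (phiMinus_decomp hδ)
  have hiA : Integrable fun x => GG (δ + x) := integrable_GG.comp_add_left δ
  have hiB : Integrable fun x => GG (δ - x) := integrable_GG_rev δ
  have hiC : Integrable fun x => GG (-δ - x) := integrable_GG_rev (-δ)
  have hiD : Integrable fun x => GG (x - δ) := integrable_GG.comp_sub_right δ
  have hint_plus : Integrable (phiPlus δ) := by
    rw [hplus]
    exact ((hiA.div_const 2).add (hiB.div_const 2)).add integrable_ind_Icc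
  have hint_minus : Integrable (phiMinus δ) := by
    rw [hminus]
    exact ((hiC.neg.div_const 2).sub (hiD.div_const 2)).add integrable_ind_Ioo
  refine ⟨hint_plus, hint_minus, ?_, ?_⟩
  · have e : (∫ x : ℝ, phiPlus δ x) = ∫ x : ℝ, (GG (δ + x) / 2 + GG (δ - x) / 2 +
        (Icc (-δ) δ).indicator (fun _ => (1:ℝ)) x) := by
      apply integral_congr_ae
      filter_upwards with x
      exact phiPlus_decomp hδ x
    rw [e]
    have hiAB : Integrable (fun x => GG (δ + x) / 2 + GG (δ - x) / 2) :=
      (hiA.div_const 2).add (hiB.div_const 2)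
    rw [integral_add hiAB integrable_ind_Icc,
      integral_add (hiA.div_const 2) (hiB.div_const 2), integral_div, integral_div,
      int_GG_shift δ, int_GG_rev δ, int_ind_Icc hδ]
    ring
  · have e : (∫ x : ℝ, phiMinus δ x) = ∫ x : ℝ, (-GG (-δ - x) / 2 - GG (x - δ) / 2 +
        (Ioo (-δ) δ).indicator (fun _ => (1:ℝ)) x) := by
      apply integral_congr_ae
      filter_upwards with x
      exact phiMinus_decomp hδ x
    rw [e]
    have hiCn : Integrable (fun x => -GG (-δ - x)) := hiC.neg
    have hiCD : Integrable (fun x => -GG (-δ - x) / 2 - GG (x - δ) / 2) :=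
      (hiCn.div_const 2).sub (hiD.div_const 2)
    rw [integral_add hiCD integrable_ind_Ioo,
      integral_sub (hiCn.div_const 2) (hiD.div_const 2), integral_div, integral_div,
      integral_neg, int_GG_rev (-δ), int_GG_sub δ, int_ind_Ioo hδ]
    ring

/-- The Beurling–Selberg majorant/minorant `φ₊`, `φ₋` of the interval `[-δ,δ]`
are Lebesgue integrable on `ℝ` with `∫ φ₊ = 2δ + 1` and `∫ φ₋ = 2δ - 1`. -/
theorem phiPlus_phiMinus_integral (δ : ℝ) (hδ : 0 < δ) :
    MeasureTheory.Integrable (phiPlus δ) ∧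
    MeasureTheory.Integrable (phiMinus δ) ∧
    (∫ x : ℝ, phiPlus δ x) = 2 * δ + 1 ∧
    (∫ x : ℝ, phiMinus δ x) = 2 * δ - 1 := by
  exact phiPlus_phiMinus_integral' δ hδ
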